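/- Let C_safe, ttd, ka, ke, Vd : ℝ with 0 < ke < ka, 0 < Vd, 0 < C_safe, and ttd ≥ t* where t* := Real.log (ka / ke) / (ka - ke). Let conc : ℝ → ℝ → ℝ be conc D t = (D * ka / (Vd * (ka - ke))) * (Real.exp (-ke * t) - Real.exp (-ka * t)). Let net : ℝ → ℝ be a function (the neural controller) satisfying: (i) for all c with 0 ≤ c ≤ C_safe, 0 ≤ net c, and (ii) for all c with 0 ≤ c ≤ C_safe, c + conc (net c) t* ≤ C_safe. Define doses : ℕ → ℝ and total : ℕ → ℝ → ℝ recursively by doses 0 = net c₀ for an initial value 0 ≤ c₀ ≤ C_safe, total n t = ∑_{i=0}^{n} max 0 (conc (doses i) (t - ttd * i)), and doses (n+1) = net (total n (ttd * (n+1))). Then for every n and every t : ℝ, 0 ≤ total n t ≤ C_safe. -/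

import Mathlib

set_option maxHeartbeats 2000000 in
theorem doses_safe (C_safe ttd ka ke Vd : ℝ)
    (hke : 0 < ke) (hka : ke < ka) (hVd : 0 < Vd) (hCs : 0 < C_safe)
    (httd : Real.log (ka / ke) / (ka - ke) ≤ ttd)
    (conc : ℝ → ℝ → ℝ)
    (hconc : ∀ D t, conc D t =
      (D * ka / (Vd * (ka - ke))) * (Real.exp (-ke * t) - Real.exp (-ka * t)))
    (net : ℝ → ℝ)
    (hnet_nonneg : ∀ c, 0 ≤ c → c ≤ C_safe → 0 ≤ net c)
    (hnet_safe : ∀ c, 0 ≤ c → c ≤ C_safe →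
      c + conc (net c) (Real.log (ka / ke) / (ka - ke)) ≤ C_safe)
    (c₀ : ℝ) (hc₀ : 0 ≤ c₀) (hc₀' : c₀ ≤ C_safe)
    (doses : ℕ → ℝ) (total : ℕ → ℝ → ℝ)
    (hdoses0 : doses 0 = net c₀)
    (htotal : ∀ n t, total n t =
      ∑ i ∈ Finset.range (n + 1), max 0 (conc (doses i) (t - ttd * i)))
    (hdosesS : ∀ n, doses (n + 1) = net (total n (ttd * (n + 1)))) :
    ∀ (n : ℕ) (t : ℝ), 0 ≤ total n t ∧ total n t ≤ C_safe := by
  set tstar : ℝ := Real.log (ka / ke) / (ka - ke) with htstar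
  have hks : 0 < ka - ke := sub_pos.mpr hka
  have hka0 : 0 < ka := hke.trans hka
  have h1lt : 1 < ka / ke := (one_lt_div hke).mpr hka
  have hts0 : 0 ≤ tstar := div_nonneg (Real.log_nonneg h1lt.le) hks.le
  have httd0 : 0 ≤ ttd := hts0.trans httd
  set g : ℝ → ℝ := fun s => Real.exp (-ke * s) - Real.exp (-ka * s) with hg
  have hgderiv : ∀ s : ℝ, HasDerivAt g
      (ka * Real.exp (-ka * s) - ke * Real.exp (-ke * s)) s := by
    intro s
    have h1 : HasDerivAt (fun y : ℝ => Real.exp (-ke * y))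
        (Real.exp (-ke * s) * (-ke * 1)) s :=
      ((hasDerivAt_id s).const_mul (-ke)).exp
    have h2 : HasDerivAt (fun y : ℝ => Real.exp (-ka * y))
        (Real.exp (-ka * s) * (-ka * 1)) s :=
      ((hasDerivAt_id s).const_mul (-ka)).exp
    have := h1.sub h2
    refine this.congr_deriv ?_
    ring
  have hgcont : Continuous g := by
    apply Continuous.sub <;> exact Real.continuous_exp.comp (by continuity)
  -- sign of the derivative
  have keylt : ∀ s : ℝ, s < tstar → ke * Real.exp (-ke * s) < ka * Real.exp (-ka * s) := by
    intro s hs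
    have h2 : Real.exp ((ka - ke) * s) < ka / ke := by
      rw [← Real.exp_log (div_pos hka0 hke)]
      apply Real.exp_lt_exp.mpr
      have h := (lt_div_iff₀ hks).mp hs
      calc (ka - ke) * s = s * (ka - ke) := mul_comm _ _
        _ < Real.log (ka / ke) := h
    have h3 : ke * Real.exp ((ka - ke) * s) < ka := by
      have := mul_lt_mul_of_pos_left h2 hke
      calc ke * Real.exp ((ka - ke) * s) < ke * (ka / ke) := this
        _ = ka := by field_simp
    have h4 := mul_lt_mul_of_pos_right h3 (Real.exp_pos (-ka * s))
    calc ke * Real.exp (-ke * s) = ke * Real.exp ((ka - ke) * s) * Real.exp (-ka * s) := by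
          rw [mul_assoc, ← Real.exp_add]
          congr 2
          ring
      _ < ka * Real.exp (-ka * s) := h4
  have keygt : ∀ s : ℝ, tstar < s → ka * Real.exp (-ka * s) < ke * Real.exp (-ke * s) := by
    intro s hs
    have h2 : ka / ke < Real.exp ((ka - ke) * s) := by
      rw [← Real.exp_log (div_pos hka0 hke)]
      apply Real.exp_lt_exp.mpr
      have h := (div_lt_iff₀ hks).mp hs
      calc Real.log (ka / ke) = Real.log (ka / ke) := rfl
        _ < s * (ka - ke) := h
        _ = (ka - ke) * s := mul_comm _ _
    have h3 : ka < ke * Real.exp ((ka - ke) * s) := by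
      have := mul_lt_mul_of_pos_left h2 hke
      calc ka = ke * (ka / ke) := by field_simp
        _ < ke * Real.exp ((ka - ke) * s) := this
    have h4 := mul_lt_mul_of_pos_right h3 (Real.exp_pos (-ka * s))
    calc ka * Real.exp (-ka * s) < ke * Real.exp ((ka - ke) * s) * Real.exp (-ka * s) := h4
      _ = ke * Real.exp (-ke * s) := by
          rw [mul_assoc, ← Real.exp_add]
          congr 2
          ring
  have gmono : StrictMonoOn g (Set.Iic tstar) := by
    apply StrictMonoOn.mono (s := Set.Iic tstar) ?_ le_rfl
    apply strictMonoOn_of_deriv_pos (convex_Iic tstar) hgcont.continuousOn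
    intro x hx
    rw [interior_Iic] at hx
    rw [(hgderiv x).deriv]
    have := keylt x hx
    linarith
  have ganti : StrictAntiOn g (Set.Ici tstar) := by
    apply strictAntiOn_of_deriv_neg (convex_Ici tstar) hgcont.continuousOn
    intro x hx
    rw [interior_Ici] at hx
    rw [(hgderiv x).deriv]
    have := keygt x hx
    linarith
  have gmax : ∀ s : ℝ, g s ≤ g tstar := by
    intro s
    rcases le_total s tstar with h | h
    · exact gmono.monotoneOn h (Set.mem_Iic.mpr le_rfl) h
    · exact ganti.antitoneOn (Set.mem_Ici.mpr le_rfl) h h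
  have g0 : g 0 = 0 := by simp [hg]
  have gts0 : 0 ≤ g tstar := g0 ▸ gmax 0
  have gneg : ∀ s : ℝ, s ≤ 0 → g s ≤ 0 := by
    intro s hs
    apply sub_nonpos.mpr
    apply Real.exp_le_exp.mpr
    nlinarith
  -- amplitude
  have hA : ∀ D : ℝ, 0 ≤ D → 0 ≤ D * ka / (Vd * (ka - ke)) := by
    intro D hD
    exact div_nonneg (mul_nonneg hD hka0.le) (mul_nonneg hVd.le hks.le)
  have peak : ∀ D : ℝ, 0 ≤ D → ∀ s : ℝ, max 0 (conc D s) ≤ conc D tstar := by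
    intro D hD s
    rw [hconc, hconc]
    apply max_le
    · exact mul_nonneg (hA D hD) gts0
    · exact mul_le_mul_of_nonneg_left (gmax s) (hA D hD)
  have mono : ∀ D : ℝ, 0 ≤ D → ∀ u v : ℝ, tstar ≤ u → u ≤ v →
      max 0 (conc D v) ≤ max 0 (conc D u) := by
    intro D hD u v hu huv
    apply max_le_max le_rfl
    rw [hconc, hconc]
    apply mul_le_mul_of_nonneg_left ?_ (hA D hD)
    exact ganti.antitoneOn (Set.mem_Ici.mpr hu) (Set.mem_Ici.mpr (hu.trans huv)) huv
  have mzero : ∀ D : ℝ, 0 ≤ D → ∀ s : ℝ, s ≤ 0 → max 0 (conc D s) = 0 := by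
    intro D hD s hs
    apply max_eq_left
    rw [hconc]
    have h1 := gneg s hs
    have h2 : D * ka / (Vd * (ka - ke)) * g s ≤ D * ka / (Vd * (ka - ke)) * 0 :=
      mul_le_mul_of_nonneg_left h1 (hA D hD)
    rw [mul_zero] at h2
    exact h2
  -- main induction
  have main : ∀ n : ℕ, (∀ i, i ≤ n → 0 ≤ doses i) ∧
      ∀ t : ℝ, 0 ≤ total n t ∧ total n t ≤ C_safe := by
    intro n
    induction n with
    | zero =>
      have hd0 : 0 ≤ doses 0 := hdoses0 ▸ hnet_nonneg c₀ hc₀ hc₀'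
      refine ⟨fun i hi => Nat.le_zero.mp hi ▸ hd0, fun t => ?_⟩
      have ht0 : total 0 t = max 0 (conc (doses 0) (t - ttd * (0 : ℕ))) := by
        rw [htotal, Finset.sum_range_one]
      refine ⟨ht0 ▸ le_max_left _ _, ?_⟩
      rw [ht0]
      have hsafe := hnet_safe c₀ hc₀ hc₀'
      rw [← hdoses0] at hsafe
      calc max 0 (conc (doses 0) (t - ttd * (0 : ℕ))) ≤ conc (doses 0) tstar :=
            peak _ hd0 _
        _ ≤ C_safe := by linarith
    | succ n ih =>
      obtain ⟨hd, ht⟩ := ih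
      have hT := ht (ttd * ((n : ℝ) + 1))
      have hdS : 0 ≤ doses (n + 1) := by
        rw [hdosesS]
        exact hnet_nonneg _ hT.1 hT.2
      have hd' : ∀ i, i ≤ n + 1 → 0 ≤ doses i := by
        intro i hi
        rcases Nat.lt_or_ge i (n + 1) with h | h
        · exact hd i (Nat.lt_succ_iff.mp h)
        · have : i = n + 1 := le_antisymm hi h
          exact this ▸ hdS
      refine ⟨hd', fun t => ?_⟩
      have hsplit : total (n + 1) t
          = total n t + max 0 (conc (doses (n + 1)) (t - ttd * ((n : ℝ) + 1))) := by
        rw [htotal (n + 1) t, Finset.sum_range_succ, ← htotal n t]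
        norm_cast
      constructor
      · rw [hsplit]
        have := (ht t).1
        have := le_max_left 0 (conc (doses (n + 1)) (t - ttd * ((n : ℝ) + 1)))
        linarith
      · rcases le_total t (ttd * ((n : ℝ) + 1)) with hcase | hcase
        · rw [hsplit, mzero _ hdS _ (by linarith), add_zero]
          exact (ht t).2
        · have h2 : total n t ≤ total n (ttd * ((n : ℝ) + 1)) := by
            rw [htotal n t, htotal n (ttd * ((n : ℝ) + 1))]
            apply Finset.sum_le_sum
            intro i hi
            have hi' : i ≤ n := Nat.lt_succ_iff.mp (Finset.mem_range.mp hi)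
            apply mono (doses i) (hd i hi') (ttd * ((n : ℝ) + 1) - ttd * i) (t - ttd * i)
            · have hi'' : (i : ℝ) ≤ (n : ℝ) := Nat.cast_le.mpr hi'
              nlinarith
            · linarith
          have h3 : max 0 (conc (doses (n + 1)) (t - ttd * ((n : ℝ) + 1)))
              ≤ conc (doses (n + 1)) tstar := peak _ hdS _
          have h4 : total n (ttd * ((n : ℝ) + 1)) + conc (doses (n + 1)) tstar ≤ C_safe := by
            have := hnet_safe _ hT.1 hT.2
            rw [← hdosesS n] at this
            exact this
          rw [hsplit]
          linarith
  exact fun n => (main n).2
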